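/- Let V be a real vector space of finite dimension m. For every subspace E ≤ V and every skew-symmetric bilinear form ε on E, the subspace L(E,ε) is a maximal isotropic subspace of V ⊕ V*: it is isotropic for the canonical symmetric bilinear form and has dimension m. -/
import Mathlib

open Module

/-- The canonical symmetric bilinear form on `V ⊕ V*`,
`⟨X+ξ, Y+η⟩ = (1/2)(ξ(Y) + η(X))`. -/
noncomputable def canForm (V : Type*) [AddCommGroup V] [Module ℝ V] :
    LinearMap.BilinForm ℝ (V × Module.Dual ℝ V) :=
  LinearMap.mk₂ ℝ (fun p q => (p.2 q.1 + q.2 p.1) / 2)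
    (fun p p' q => by simp; ring)
    (fun c p q => by simp; ring)
    (fun p q q' => by simp; ring)
    (fun c p q => by simp; ring)

/-- The maximal isotropic subspace `L(E,ε) = {X + ξ ∈ E ⊕ V* : ξ|_E = ε(X)}`
determined by a subspace `E ≤ V` and a bilinear form `ε` on `E`. -/
noncomputable def LEeps {V : Type*} [AddCommGroup V] [Module ℝ V]
    (E : Submodule ℝ V) (ε : E →ₗ[ℝ] E →ₗ[ℝ] ℝ) :
    Submodule ℝ (V × Module.Dual ℝ V) where
  carrier := {p | ∃ h : p.1 ∈ E, ∀ y : E, p.2 y.1 = ε ⟨p.1, h⟩ y}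
  add_mem' := by
    rintro p q ⟨hp, hp2⟩ ⟨hq, hq2⟩
    refine ⟨add_mem hp hq, fun y => ?_⟩
    have h1 : (⟨(p + q).1, add_mem hp hq⟩ : E) = ⟨p.1, hp⟩ + ⟨q.1, hq⟩ := rfl
    rw [h1, map_add]
    simp [hp2 y, hq2 y]
  zero_mem' := ⟨zero_mem E, fun y => by
    have h1 : (⟨(0 : V × Module.Dual ℝ V).1, zero_mem E⟩ : E) = 0 := rfl
    rw [h1, map_zero]
    simp⟩
  smul_mem' := by
    rintro c p ⟨hp, hp2⟩
    refine ⟨Submodule.smul_mem E c hp, fun y => ?_⟩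
    have h1 : (⟨(c • p).1, Submodule.smul_mem E c hp⟩ : E) = c • (⟨p.1, hp⟩ : E) := rfl
    rw [h1, map_smul]
    simp [hp2 y]

section Aux
variable {V : Type*} [AddCommGroup V] [Module ℝ V]

/-- Auxiliary map `E × E⁰ → V × V*`, `(x, η) ↦ (x, ε(x)∘π + η)`. -/
noncomputable def toLmap (E : Submodule ℝ V) (ε : E →ₗ[ℝ] E →ₗ[ℝ] ℝ) (π : V →ₗ[ℝ] E) :
    (E × E.dualAnnihilator) →ₗ[ℝ] V × Module.Dual ℝ V where
  toFun p := (p.1.1, (ε p.1) ∘ₗ π + p.2.1)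
  map_add' p q := by
    refine Prod.ext rfl ?_
    ext v
    simp [map_add]
    ring
  map_smul' c p := by
    refine Prod.ext rfl ?_
    ext v
    simp

theorem toLmap_mem (E : Submodule ℝ V) (ε : E →ₗ[ℝ] E →ₗ[ℝ] ℝ) (π : V →ₗ[ℝ] E)
    (hπ : ∀ x : E, π x.1 = x) (p : E × E.dualAnnihilator) :
    toLmap E ε π p ∈ LEeps E ε := by
  refine ⟨p.1.2, fun y => ?_⟩
  have hy : p.2.1 y.1 = 0 := (Submodule.mem_dualAnnihilator _).mp p.2.2 y.1 y.2
  have h1 : (⟨(toLmap E ε π p).1, p.1.2⟩ : E) = p.1 := rfl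
  rw [h1]
  simp [toLmap, hy, hπ y]

/-- Auxiliary map `L(E,ε) → E × E⁰`. -/
noncomputable def fromLmap (E : Submodule ℝ V) (ε : E →ₗ[ℝ] E →ₗ[ℝ] ℝ) (π : V →ₗ[ℝ] E)
    (hπ : ∀ x : E, π x.1 = x) :
    (LEeps E ε) →ₗ[ℝ] E × E.dualAnnihilator where
  toFun p := (⟨p.1.1, p.2.choose⟩,
    ⟨p.1.2 - (ε ⟨p.1.1, p.2.choose⟩) ∘ₗ π, by
      rw [Submodule.mem_dualAnnihilator]
      intro w hw
      have h := p.2.choose_spec ⟨w, hw⟩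
      simp [h, hπ ⟨w, hw⟩]⟩)
  map_add' p q := by
    refine Prod.ext (Subtype.ext rfl) (Subtype.ext ?_)
    have h1 : (⟨(p + q).1.1, (p + q).2.choose⟩ : E)
        = ⟨p.1.1, p.2.choose⟩ + ⟨q.1.1, q.2.choose⟩ := rfl
    show (p + q).1.2 - (ε ⟨(p + q).1.1, (p + q).2.choose⟩) ∘ₗ π = _
    rw [h1, map_add]
    ext v
    simp
    ring
  map_smul' c p := by
    refine Prod.ext (Subtype.ext rfl) (Subtype.ext ?_)
    have h1 : (⟨(c • p).1.1, (c • p).2.choose⟩ : E) = c • (⟨p.1.1, p.2.choose⟩ : E) := rfl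
    show (c • p).1.2 - (ε ⟨(c • p).1.1, (c • p).2.choose⟩) ∘ₗ π = _
    rw [h1, map_smul]
    ext v
    simp
    ring

/-- The linear equivalence `E × E⁰ ≃ L(E,ε)`. -/
noncomputable def LEepsEquiv (E : Submodule ℝ V) (ε : E →ₗ[ℝ] E →ₗ[ℝ] ℝ) (π : V →ₗ[ℝ] E)
    (hπ : ∀ x : E, π x.1 = x) :
    (E × E.dualAnnihilator) ≃ₗ[ℝ] LEeps E ε :=
  LinearEquiv.ofLinear
    ((toLmap E ε π).codRestrict (LEeps E ε) (toLmap_mem E ε π hπ))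
    (fromLmap E ε π hπ)
    (LinearMap.ext fun p => Subtype.ext <| by
      show toLmap E ε π (fromLmap E ε π hπ p) = p.1
      refine Prod.ext rfl ?_
      show (ε ((fromLmap E ε π hπ p).1)) ∘ₗ π + ((fromLmap E ε π hπ p).2 : Module.Dual ℝ V)
        = p.1.2
      show (ε ⟨p.1.1, p.2.choose⟩) ∘ₗ π + (p.1.2 - (ε ⟨p.1.1, p.2.choose⟩) ∘ₗ π) = p.1.2
      abel)
    (LinearMap.ext fun p => by
      refine Prod.ext (Subtype.ext rfl) (Subtype.ext ?_)
      show (toLmap E ε π p).2 - (ε ⟨(toLmap E ε π p).1, _⟩) ∘ₗ π = p.2.1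
      have h1 : (⟨(toLmap E ε π p).1,
          ((toLmap E ε π).codRestrict (LEeps E ε) (toLmap_mem E ε π hπ) p).2.choose⟩ : E)
          = p.1 := rfl
      rw [h1]
      show (ε p.1) ∘ₗ π + p.2.1 - (ε p.1) ∘ₗ π = p.2.1
      abel)

end Aux

/-- For every subspace `E ≤ V` and skew form `ε` on `E`, the subspace `L(E,ε)`
is maximal isotropic: isotropic for the canonical form and of dimension `m`. -/
theorem LEeps_maximal_isotropic
    (V : Type*) [AddCommGroup V] [Module ℝ V] [FiniteDimensional ℝ V]
    (m : ℕ) (hm : Module.finrank ℝ V = m)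
    (E : Submodule ℝ V) (ε : E →ₗ[ℝ] E →ₗ[ℝ] ℝ)
    (hskew : ∀ x y : E, ε x y = - ε y x) :
    (∀ p ∈ LEeps E ε, ∀ q ∈ LEeps E ε, canForm V p q = 0) ∧
    Module.finrank ℝ (LEeps E ε) = m := by
  constructor
  · rintro p ⟨hp, hp2⟩ q ⟨hq, hq2⟩
    have h1 : p.2 q.1 = ε ⟨p.1, hp⟩ ⟨q.1, hq⟩ := hp2 ⟨q.1, hq⟩
    have h2 : q.2 p.1 = ε ⟨q.1, hq⟩ ⟨p.1, hp⟩ := hq2 ⟨p.1, hp⟩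
    show (p.2 q.1 + q.2 p.1) / 2 = 0
    rw [h1, h2, hskew]
    ring
  · obtain ⟨E', hE'⟩ := Submodule.exists_isCompl E
    set π := E.linearProjOfIsCompl E' hE'
    have hπ : ∀ x : E, π x.1 = x := fun x =>
      Submodule.linearProjOfIsCompl_apply_left hE' x
    have h : Module.finrank ℝ (E × E.dualAnnihilator) = Module.finrank ℝ (LEeps E ε) :=
      LinearEquiv.finrank_eq (LEepsEquiv E ε π hπ)
    haveI : Module.Free ℝ E.dualAnnihilator := @Module.Free.of_divisionRing ℝ E.dualAnnihilator _ _ _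
    rw [← h, Module.finrank_prod]
    have h2 : Module.finrank ℝ (V ⧸ E) = Module.finrank ℝ E.dualAnnihilator :=
      LinearEquiv.finrank_eq (Subspace.quotEquivAnnihilator E)
    rw [← h2]
    have h3 := Submodule.finrank_quotient_add_finrank E
    omega
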